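/- For all natural numbers n and m with m ≤ n, the list C_{n,m} contains every binary string of length n with exactly m ones exactly once; in particular, C_{n,m} has no duplicate entries and its length is the binomial coefficient C(n, m). -/

import Mathlib

/-- The Gray-style code `C_{n,m}`: a list of binary strings (lists of Booleans,
`true` = 1, `false` = 0).  `C_{0,0}` is the one-element list containing the empty
string, `C_{n,0} = [0^n]`, `C_{n,n} = [1^n]` for `n > 0`, and for `0 < m < n`,
`C_{n,m}` is the concatenation of the list obtained by prepending `0` to every
string of `C_{n-1,m}` with the reverse of the list obtained by prepending `1` to
every string of `C_{n-1,m-1}`. -/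
def grayCode : ℕ → ℕ → List (List Bool)
  | 0, _ => [[]]
  | n + 1, 0 => [List.replicate (n + 1) false]
  | n + 1, m + 1 =>
    if m + 1 = n + 1 then [List.replicate (n + 1) true]
    else (grayCode n (m + 1)).map (List.cons false) ++
      ((grayCode n m).map (List.cons true)).reverse

/-- For all natural numbers `n` and `m` with `m ≤ n`, the list `C_{n,m}` contains
every binary string of length `n` with exactly `m` ones exactly once; in
particular, `C_{n,m}` has no duplicate entries and its length is the binomial
coefficient `C(n, m)`. -/
lemma grayCode_aux : ∀ n m : ℕ, m ≤ n →
    (∀ s : List Bool, s ∈ grayCode n m ↔ s.length = n ∧ s.count true = m) ∧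
    (grayCode n m).Nodup ∧ (grayCode n m).length = n.choose m := by
  intro n
  induction n with
  | zero =>
    intro m hm
    interval_cases m
    refine ⟨fun s => ?_, by simp [grayCode], by simp [grayCode]⟩
    simp only [grayCode, List.mem_singleton]
    constructor
    · rintro rfl; simp
    · rintro ⟨h1, _⟩; exact List.eq_nil_of_length_eq_zero h1
  | succ n ih =>
    intro m hm
    match m with
    | 0 =>
      refine ⟨fun s => ?_, by simp [grayCode], by simp [grayCode]⟩
      simp only [grayCode, List.mem_singleton]
      constructor
      · rintro rfl; exact ⟨by simp, List.count_eq_zero.mpr (by simp)⟩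
      · rintro ⟨h1, h2⟩
        rw [List.count_eq_zero] at h2
        rw [List.eq_replicate_iff]
        exact ⟨h1, fun b hb => by cases b; rfl; exact absurd hb h2⟩
    | m + 1 =>
      by_cases he : m + 1 = n + 1
      · obtain rfl : n = m := by omega
        have hdef : grayCode (n+1) (n+1) = [List.replicate (n+1) true] := by
          simp [grayCode]
        refine ⟨fun s => ?_, by simp [hdef], by simp [hdef]⟩
        rw [hdef, List.mem_singleton]
        constructor
        · rintro rfl; simp
        · rintro ⟨h1, h2⟩
          rw [List.eq_replicate_iff]
          refine ⟨h1, fun b hb => ?_⟩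
          have := (List.count_eq_length (l := s) (a := true)).mp (by omega)
          exact (this b hb).symm
      · have hmn : m + 1 ≤ n := by omega
        obtain ⟨ih1, ih2, ih3⟩ := ih (m + 1) hmn
        obtain ⟨ih1', ih2', ih3'⟩ := ih m (by omega)
        have hdef : grayCode (n+1) (m+1) = (grayCode n (m + 1)).map (List.cons false) ++
            ((grayCode n m).map (List.cons true)).reverse := by
          simp only [grayCode, if_neg he]
        refine ⟨fun s => ?_, ?_, ?_⟩
        · rw [hdef]
          simp only [List.mem_append, List.mem_reverse, List.mem_map]
          constructor
          · rintro (⟨t, ht, rfl⟩ | ⟨t, ht, rfl⟩)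
            · obtain ⟨h1, h2⟩ := (ih1 t).mp ht
              simp [h1, h2]
            · obtain ⟨h1, h2⟩ := (ih1' t).mp ht
              simp [h1, h2]
          · rintro ⟨h1, h2⟩
            match s with
            | false :: t =>
              left
              exact ⟨t, (ih1 t).mpr ⟨by simpa using h1, by simpa using h2⟩, rfl⟩
            | true :: t =>
              right
              refine ⟨t, (ih1' t).mpr ⟨by simpa using h1, ?_⟩, rfl⟩
              simp only [List.count_cons_self] at h2
              omega
        · rw [hdef]
          refine List.Nodup.append (ih2.map fun a b h => by injection h)
            (List.nodup_reverse.mpr (ih2'.map fun a b h => by injection h)) ?_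
          intro s hs hs'
          simp only [List.mem_map] at hs
          simp only [List.mem_reverse, List.mem_map] at hs'
          obtain ⟨t, _, rfl⟩ := hs
          obtain ⟨t', _, h⟩ := hs'
          injection h with h1
          exact Bool.noConfusion h1
        · rw [hdef]
          simp [ih3, ih3', Nat.choose_succ_succ, Nat.add_comm]

theorem grayCode_complete_nodup (n m : ℕ) (h : m ≤ n) :
    (∀ s : List Bool, s.length = n → s.count true = m → (grayCode n m).count s = 1) ∧
    (grayCode n m).Nodup ∧ (grayCode n m).length = n.choose m := by
  obtain ⟨h1, h2, h3⟩ := grayCode_aux n m h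
  refine ⟨fun s hl hc => ?_, h2, h3⟩
  have := List.count_eq_one_of_mem h2 ((h1 s).mpr ⟨hl, hc⟩)
  convert this using 2
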